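/- If the operator A = T(a) + E is invertible on ℓ² (i.e., A is a unit in the algebra of bounded linear operators on ℓ²), then the Toeplitz operator T(a) is invertible on ℓ². -/

import Mathlib

open scoped ENNReal

noncomputable section

/-- The polynomial `b_λ(z) = z^m (a(z) - λ) = ∑_{k=0}^{m+n} a_{k-m} z^k - λ z^m`. -/
def bpoly (m n : ℕ) (a : ℤ → ℂ) (lam : ℂ) : Polynomial ℂ :=
  (∑ k ∈ Finset.range (m + n + 1), Polynomial.C (a ((k : ℤ) - (m : ℤ))) * Polynomial.X ^ k)
    - Polynomial.C lam * Polynomial.X ^ m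

/-- `p(λ)`: the number of roots of `b_λ` in the open unit disk, counted with multiplicity. -/
def rootCount (m n : ℕ) (a : ℤ → ℂ) (lam : ℂ) : ℕ :=
  Multiset.card ((bpoly m n a lam).roots.filter fun z => ‖z‖ < 1)

/-- The value `a(z) = ∑_{k=-m}^{n} a_k z^k` of the Laurent polynomial. -/
def aval (m n : ℕ) (a : ℤ → ℂ) (z : ℂ) : ℂ :=
  ∑ k ∈ Finset.Icc (-(m : ℤ)) (n : ℤ), a k * z ^ k

/-- The image `a(𝕋)` of the unit circle under the Laurent polynomial `a`. -/
def aCircle (m n : ℕ) (a : ℤ → ℂ) : Set ℂ :=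
  {w : ℂ | ∃ z : ℂ, ‖z‖ = 1 ∧ aval m n a z = w}

/-- The Hilbert space `ℓ²` of square-summable complex sequences (0-indexed). -/
abbrev ell2 := lp (fun _ : ℕ => ℂ) 2

section AuxiliaryLemmas

open Polynomial Filter

noncomputable section

/-- Telescoping: if `(X - λ)·H = q` with the coefficients of `H` tending to `0`
and `|λ| ≤ 1`, then `λ` is a root of `q`. -/
lemma telescope_root (lam : ℂ) (hlam : ‖lam‖ ≤ 1)
    (H : PowerSeries ℂ)
    (hH : Tendsto (fun i => PowerSeries.coeff i H) atTop (nhds 0))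
    (q : Polynomial ℂ)
    (hq : ((Polynomial.X - Polynomial.C lam : Polynomial ℂ) : PowerSeries ℂ) * H = ↑q) :
    q.eval lam = 0 := by
  have hcoeff : ∀ i : ℕ, q.coeff i =
      (if i = 0 then 0 else PowerSeries.coeff (i-1) H) - lam * PowerSeries.coeff i H := by
    intro i
    have := congrArg (PowerSeries.coeff i) hq
    rw [Polynomial.coeff_coe] at this
    rw [← this, Polynomial.coe_sub, Polynomial.coe_X, Polynomial.coe_C, sub_mul,
      map_sub, PowerSeries.coeff_C_mul]
    cases i with
    | zero => simp [PowerSeries.coeff_zero_X_mul]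
    | succ k => simp [PowerSeries.coeff_succ_X_mul]
  have key : ∀ N : ℕ, ∑ i ∈ Finset.range (N+1), q.coeff i * lam ^ i
      = -(lam ^ (N+1) * PowerSeries.coeff N H) := by
    intro N
    induction N with
    | zero => rw [Finset.sum_range_one, hcoeff 0]; simp
    | succ k ih =>
        rw [Finset.sum_range_succ, ih, hcoeff (k+1)]
        simp only [Nat.succ_ne_zero, if_neg, Nat.add_sub_cancel]
        ring_nf
        simp [pow_succ]
  have heval : ∀ N : ℕ, q.natDegree ≤ N →
      q.eval lam = -(lam ^ (N+1) * PowerSeries.coeff N H) := by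
    intro N hN
    rw [← key N, Polynomial.eval_eq_sum_range' (lt_of_le_of_lt hN (Nat.lt_succ_self N))]
  have htend : Tendsto (fun N : ℕ => -(lam ^ (N+1) * PowerSeries.coeff N H)) atTop (nhds 0) := by
    rw [← neg_zero]
    apply Tendsto.neg
    refine squeeze_zero_norm (fun N => ?_) (by simpa using hH.norm)
    rw [norm_mul]
    calc ‖lam ^ (N+1)‖ * ‖PowerSeries.coeff N H‖
        ≤ 1 * ‖PowerSeries.coeff N H‖ := by
          apply mul_le_mul_of_nonneg_right _ (norm_nonneg _)
          rw [norm_pow]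
          exact pow_le_one₀ (norm_nonneg _) hlam
      _ = ‖PowerSeries.coeff N H‖ := one_mul _
  have : Tendsto (fun _ : ℕ => q.eval lam) atTop (nhds 0) := by
    apply htend.congr'
    filter_upwards [eventually_ge_atTop q.natDegree] with N hN
    exact (heval N hN).symm
  exact tendsto_nhds_unique tendsto_const_nhds this

/-- coefficients of a polynomial multiple of a power series with vanishing coefficients vanish. -/
lemma tendsto_coeff_poly_mul (c : Polynomial ℂ) (F : PowerSeries ℂ)
    (hF : Tendsto (fun i => PowerSeries.coeff i F) atTop (nhds 0)) :
    Tendsto (fun i => PowerSeries.coeff i ((c : PowerSeries ℂ) * F)) atTop (nhds 0) := by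
  set d := c.natDegree
  have hsum : Tendsto (fun i => ∑ k ∈ Finset.range (d+1),
      c.coeff k * PowerSeries.coeff (i - k) F) atTop (nhds 0) := by
    have : (0 : ℂ) = ∑ k ∈ Finset.range (d+1), (0:ℂ) := by simp
    rw [this]
    apply tendsto_finset_sum
    intro k _
    rw [show (0:ℂ) = c.coeff k * 0 by ring]
    exact (hF.comp (tendsto_sub_atTop_nat k)).const_mul _
  apply hsum.congr'
  filter_upwards [eventually_ge_atTop d] with i hi
  rw [PowerSeries.coeff_mul, Finset.Nat.sum_antidiagonal_eq_sum_range_succ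
    (fun a b => PowerSeries.coeff a (c : PowerSeries ℂ) * PowerSeries.coeff b F)]
  simp only [Polynomial.coeff_coe]
  exact Finset.sum_subset (Finset.range_subset_range.2 (by omega : d + 1 ≤ i + 1)) (fun k _ hk => by
    simp only [Finset.mem_range, not_lt] at hk
    rw [Polynomial.coeff_eq_zero_of_natDegree_lt (by omega), zero_mul])

end

noncomputable section

/-- Main root-counting lemma: if `∏_{z∈S}(X-z) · F = q` with `|z| ≤ 1` for all `z ∈ S`,
`F` has coefficients tending to zero, and `q ≠ 0`, then `S.card ≤ q.natDegree`. -/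
lemma card_le_natDegree_of_prod_mul (S : Multiset ℂ) :
    (∀ z ∈ S, ‖z‖ ≤ 1) → ∀ (F : PowerSeries ℂ) (q : Polynomial ℂ),
    Tendsto (fun i => PowerSeries.coeff i F) atTop (nhds 0) →
    (((S.map fun z => Polynomial.X - Polynomial.C z).prod : Polynomial ℂ) : PowerSeries ℂ) * F
      = ↑q → q ≠ 0 → Multiset.card S ≤ q.natDegree := by
  induction S using Multiset.induction with
  | empty => intro _ F q _ _ _; simp
  | cons z S ih =>
      intro hS F q hF hq hq0
      have hz : ‖z‖ ≤ 1 := hS z (Multiset.mem_cons_self z S)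
      rw [Multiset.map_cons, Multiset.prod_cons, Polynomial.coe_mul, mul_assoc] at hq
      set H := (((S.map fun z => Polynomial.X - Polynomial.C z).prod : Polynomial ℂ) :
        PowerSeries ℂ) * F with hH
      have hHtend : Tendsto (fun i => PowerSeries.coeff i H) atTop (nhds 0) :=
        tendsto_coeff_poly_mul _ _ hF
      have hroot : q.eval z = 0 := telescope_root z hz H hHtend q hq
      obtain ⟨q₁, hq₁⟩ := (Polynomial.dvd_iff_isRoot.2 hroot)
      have hXz : ((Polynomial.X - Polynomial.C z : Polynomial ℂ) : PowerSeries ℂ) ≠ 0 := by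
        rw [Ne, Polynomial.coe_eq_zero_iff]
        exact Polynomial.X_sub_C_ne_zero z
      have hq₁0 : q₁ ≠ 0 := by
        rintro rfl
        rw [mul_zero] at hq₁
        exact hq0 hq₁
      have hHq₁ : H = (q₁ : PowerSeries ℂ) := by
        have : ((Polynomial.X - Polynomial.C z : Polynomial ℂ) : PowerSeries ℂ) * H
            = ((Polynomial.X - Polynomial.C z : Polynomial ℂ) : PowerSeries ℂ) * (q₁ : PowerSeries ℂ) := by
          rw [hq, hq₁, Polynomial.coe_mul]
        exact mul_left_cancel₀ hXz this
      have hcard := ih (fun w hw => hS w (Multiset.mem_cons_of_mem hw)) F q₁ hF (hH ▸ hHq₁) hq₁0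
      rw [hq₁, Polynomial.natDegree_mul (Polynomial.X_sub_C_ne_zero z) hq₁0,
        Polynomial.natDegree_X_sub_C]
      simp only [Multiset.card_cons]
      omega

end

noncomputable section

open Polynomial

lemma coburn_core (m n : ℕ) (hm : 1 ≤ m) (hn : 1 ≤ n) (a : ℤ → ℂ)
    (ham : a (-(m : ℤ)) ≠ 0) (han : a (n : ℤ) ≠ 0)
    (hsupp : ∀ k : ℤ, (k < -(m : ℤ) ∨ (n : ℤ) < k) → a k = 0)
    (v w : ℕ → ℂ)
    (hv0 : Tendsto v atTop (nhds 0)) (hw0 : Tendsto w atTop (nhds 0))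
    (hv : ∀ i : ℕ, ∑ j ∈ Finset.range (i + n + 1), a ((j:ℤ) - (i:ℤ)) * v j = 0)
    (hw : ∀ i : ℕ, ∑ j ∈ Finset.range (i + m + 1), a ((i:ℤ) - (j:ℤ)) * w j = 0)
    (hvne : v ≠ 0) (hwne : w ≠ 0) : False := by
  classical
  set b : Polynomial ℂ := ∑ k ∈ Finset.range (m+n+1), C (a ((k:ℤ) - m)) * X ^ k with hbdef
  set c : Polynomial ℂ := ∑ k ∈ Finset.range (m+n+1), C (a ((n:ℤ) - k)) * X ^ k with hcdef
  have hbc : ∀ k : ℕ, b.coeff k = a ((k:ℤ) - m) := by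
    intro k
    rw [hbdef]
    simp only [Polynomial.finset_sum_coeff, Polynomial.coeff_C_mul, Polynomial.coeff_X_pow,
      mul_ite, mul_one, mul_zero]
    rw [Finset.sum_ite_eq (Finset.range (m+n+1)) k (fun j => a ((j:ℤ) - m))]
    split_ifs with h
    · rfl
    · simp only [Finset.mem_range, not_lt] at h
      exact (hsupp _ (Or.inr (by push_cast; omega))).symm
  have hcc : ∀ k : ℕ, c.coeff k = a ((n:ℤ) - k) := by
    intro k
    rw [hcdef]
    simp only [Polynomial.finset_sum_coeff, Polynomial.coeff_C_mul, Polynomial.coeff_X_pow,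
      mul_ite, mul_one, mul_zero]
    rw [Finset.sum_ite_eq (Finset.range (m+n+1)) k (fun j => a ((n:ℤ) - j))]
    split_ifs with h
    · rfl
    · simp only [Finset.mem_range, not_lt] at h
      exact (hsupp _ (Or.inl (by push_cast; omega))).symm
  set F : PowerSeries ℂ := PowerSeries.mk v with hFdef
  set G : PowerSeries ℂ := PowerSeries.mk w with hGdef
  have hFc : ∀ i : ℕ, PowerSeries.coeff i F = v i := fun i => PowerSeries.coeff_mk i v
  have hGc : ∀ i : ℕ, PowerSeries.coeff i G = w i := fun i => PowerSeries.coeff_mk i w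
  have hFtend : Tendsto (fun i => PowerSeries.coeff i F) atTop (nhds 0) := by
    simpa [hFc] using hv0
  have hGtend : Tendsto (fun i => PowerSeries.coeff i G) atTop (nhds 0) := by
    simpa [hGc] using hw0
  -- coefficients of c·F and b·G
  have hcF : ∀ i : ℕ, PowerSeries.coeff i ((c : PowerSeries ℂ) * F)
      = ∑ k ∈ Finset.range (i+1), a ((n:ℤ) - k) * v (i - k) := by
    intro i
    rw [PowerSeries.coeff_mul, Finset.Nat.sum_antidiagonal_eq_sum_range_succ
      (fun x y => PowerSeries.coeff x (c : PowerSeries ℂ) * PowerSeries.coeff y F)]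
    exact Finset.sum_congr rfl fun k _ => by rw [Polynomial.coeff_coe, hcc, hFc]
  have hbG : ∀ i : ℕ, PowerSeries.coeff i ((b : PowerSeries ℂ) * G)
      = ∑ k ∈ Finset.range (i+1), a ((k:ℤ) - m) * w (i - k) := by
    intro i
    rw [PowerSeries.coeff_mul, Finset.Nat.sum_antidiagonal_eq_sum_range_succ
      (fun x y => PowerSeries.coeff x (b : PowerSeries ℂ) * PowerSeries.coeff y G)]
    exact Finset.sum_congr rfl fun k _ => by rw [Polynomial.coeff_coe, hbc, hGc]
  -- vanishing of high coefficients
  have hcF0 : ∀ i : ℕ, n ≤ i → PowerSeries.coeff i ((c : PowerSeries ℂ) * F) = 0 := by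
    intro i hi
    rw [hcF i]
    have h1 := hv (i - n)
    rw [show i - n + n + 1 = i + 1 by omega] at h1
    rw [← h1]
    rw [← Finset.sum_range_reflect (fun k => a ((n:ℤ) - k) * v (i - k)) (i+1)]
    apply Finset.sum_congr rfl
    intro j hj
    simp only [Finset.mem_range] at hj
    have hji : j ≤ i := by omega
    congr 1
    · congr 1
      push_cast [Nat.cast_sub hji, Nat.cast_sub (by omega : j ≤ i + 1 - 1),
        Nat.cast_sub (by omega : n ≤ i)]
      push_cast
      omega
    · congr 1
      omega
  have hbG0 : ∀ i : ℕ, m ≤ i → PowerSeries.coeff i ((b : PowerSeries ℂ) * G) = 0 := by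
    intro i hi
    rw [hbG i]
    have h1 := hw (i - m)
    rw [show i - m + m + 1 = i + 1 by omega] at h1
    rw [← h1]
    rw [← Finset.sum_range_reflect (fun k => a ((k:ℤ) - m) * w (i - k)) (i+1)]
    apply Finset.sum_congr rfl
    intro j hj
    simp only [Finset.mem_range] at hj
    have hji : j ≤ i := by omega
    congr 1
    · congr 1
      push_cast [Nat.cast_sub hji, Nat.cast_sub (by omega : j ≤ i + 1 - 1),
        Nat.cast_sub (by omega : m ≤ i)]
      push_cast
      omega
    · congr 1
      omega
  set q : Polynomial ℂ := PowerSeries.trunc n ((c : PowerSeries ℂ) * F) with hqdef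
  set p : Polynomial ℂ := PowerSeries.trunc m ((b : PowerSeries ℂ) * G) with hpdef
  have hq : (c : PowerSeries ℂ) * F = ↑q := by
    apply PowerSeries.ext
    intro i
    rw [Polynomial.coeff_coe, hqdef, PowerSeries.coeff_trunc]
    split_ifs with h
    · rfl
    · exact hcF0 i (by omega)
  have hp : (b : PowerSeries ℂ) * G = ↑p := by
    apply PowerSeries.ext
    intro i
    rw [Polynomial.coeff_coe, hpdef, PowerSeries.coeff_trunc]
    split_ifs with h
    · rfl
    · exact hbG0 i (by omega)
  have hcne : (c : PowerSeries ℂ) ≠ 0 := by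
    rw [Ne, Polynomial.coe_eq_zero_iff]
    intro h
    apply han
    have := hcc 0
    rw [h] at this
    simpa using this.symm
  have hbne : (b : PowerSeries ℂ) ≠ 0 := by
    rw [Ne, Polynomial.coe_eq_zero_iff]
    intro h
    apply ham
    have := hbc 0
    rw [h] at this
    simp only [Polynomial.coeff_zero] at this
    rw [show ((0:ℕ):ℤ) - (m:ℤ) = -(m:ℤ) by omega] at this
    exact this.symm
  have hqne : q ≠ 0 := by
    intro h
    rw [h] at hq
    simp only [Polynomial.coe_zero] at hq
    rcases mul_eq_zero.mp hq with h' | h'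
    · exact hcne h'
    · exact hvne (funext fun i => by rw [← hFc i, h', map_zero]; rfl)
  have hpne : p ≠ 0 := by
    intro h
    rw [h] at hp
    simp only [Polynomial.coe_zero] at hp
    rcases mul_eq_zero.mp hp with h' | h'
    · exact hbne h'
    · exact hwne (funext fun i => by rw [← hGc i, h', map_zero]; rfl)
  -- degree of b
  have hbdeg : b.natDegree = m + n := by
    apply le_antisymm
    · rw [Polynomial.natDegree_le_iff_coeff_eq_zero]
      intro N hN
      rw [hbc]
      exact hsupp _ (Or.inr (by push_cast; omega))
    · apply Polynomial.le_natDegree_of_ne_zero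
      rw [hbc]
      rw [show ((m+n:ℕ):ℤ) - (m:ℤ) = (n:ℤ) by push_cast; omega]
      exact han
  have hbne' : b ≠ 0 := fun h => hbne (by rw [h, Polynomial.coe_zero])
  have hcard' : Multiset.card b.roots = b.natDegree :=
    (Polynomial.splits_iff_card_roots.mp (IsAlgClosed.splits b))
  have hcard : Multiset.card b.roots = m + n := hcard'.trans hbdeg
  have hlead : b.leadingCoeff = a (n:ℤ) := by
    rw [Polynomial.leadingCoeff, hbdeg, hbc,
      show ((m+n:ℕ):ℤ) - (m:ℤ) = (n:ℤ) by push_cast; omega]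
  have hfact : C (a (n:ℤ)) * (b.roots.map fun z => X - C z).prod = b := by
    rw [← hlead]
    exact Polynomial.C_leadingCoeff_mul_prod_multiset_X_sub_C hcard'
  -- c is the reverse of b
  have hrevmul : ∀ (S : Multiset (Polynomial ℂ)),
      (Multiset.prod S).reverse = (S.map Polynomial.reverse).prod := by
    intro S
    induction S using Multiset.induction with
    | empty =>
        simp only [Multiset.map_zero, Multiset.prod_zero]
        rw [← Polynomial.C_1, Polynomial.reverse_C]
    | cons t S ih => rw [Multiset.prod_cons, Polynomial.reverse_mul_of_domain,
        Multiset.map_cons, Multiset.prod_cons, ih]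
  have hXr : ∀ z : ℂ, (Polynomial.X - Polynomial.C z).reverse = 1 - Polynomial.C z * X := by
    intro z
    ext k
    rw [Polynomial.coeff_reverse, Polynomial.natDegree_X_sub_C]
    match k with
    | 0 =>
        rw [Polynomial.revAt_le (by omega)]
        simp
    | 1 =>
        rw [Polynomial.revAt_le (by omega)]
        simp [Polynomial.coeff_one]
    | (k+2) =>
        rw [Polynomial.revAt_eq_self_of_lt (by omega)]
        simp [Polynomial.coeff_one, Polynomial.coeff_X]
  have hcrev : c = b.reverse := by
    apply Polynomial.ext
    intro k
    rw [Polynomial.coeff_reverse, hbdeg, hcc]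
    by_cases hk : k ≤ m + n
    · rw [Polynomial.revAt_le hk, hbc]
      congr 1
      push_cast [Nat.cast_sub hk]
      omega
    · rw [Polynomial.revAt_eq_self_of_lt (by omega), hbc,
        hsupp _ (Or.inl (by push_cast; omega)), hsupp _ (Or.inr (by push_cast; omega))]
  have hcfact : c = C (a (n:ℤ)) * (b.roots.map fun z => 1 - Polynomial.C z * X).prod := by
    have h1 := congrArg Polynomial.reverse hfact
    rw [Polynomial.reverse_mul_of_domain, Polynomial.reverse_C, hrevmul,
      Multiset.map_map] at h1
    rw [hcrev, ← h1]
    congr 1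
    apply congrArg Multiset.prod
    apply Multiset.map_congr rfl
    intro z _
    exact hXr z
  -- split roots
  set R := b.roots with hRdef
  set R₁ := R.filter (fun z => 1 ≤ ‖z‖) with hR1def
  set R₂ := R.filter (fun z => ¬ 1 ≤ ‖z‖) with hR2def
  have hRsplit : R₁ + R₂ = R := Multiset.filter_add_not _ R
  set Rle := R.filter (fun z => ‖z‖ ≤ 1) with hRledef
  set Rgt := R.filter (fun z => ¬ ‖z‖ ≤ 1) with hRgtdef
  have hRsplit' : Rle + Rgt = R := Multiset.filter_add_not _ R
  -- c-side application
  have hz0 : ∀ z ∈ R₁, z ≠ 0 := by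
    intro z hz
    have : 1 ≤ ‖z‖ := (Multiset.mem_filter.mp hz).2
    intro h
    rw [h, norm_zero] at this
    exact absurd this (by norm_num)
  have hR1prod : (R₁.map fun z => 1 - Polynomial.C z * X).prod
      = (R₁.map fun z => -Polynomial.C z).prod *
        ((R₁.map fun z : ℂ => z⁻¹).map fun z => X - Polynomial.C z).prod := by
    rw [Multiset.map_map, ← Multiset.prod_map_mul]
    apply congrArg
    apply Multiset.map_congr rfl
    intro z hz
    have hzne : z ≠ 0 := hz0 z hz
    have : Polynomial.C z * Polynomial.C z⁻¹ = 1 := by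
      rw [← Polynomial.C_mul, mul_inv_cancel₀ hzne, Polynomial.C_1]
    calc (1 : Polynomial ℂ) - Polynomial.C z * X
        = Polynomial.C z * Polynomial.C z⁻¹ - Polynomial.C z * X := by rw [this]
      _ = -Polynomial.C z * (X - Polynomial.C z⁻¹) := by ring
      _ = (fun z => -Polynomial.C z) z * ((fun z => X - Polynomial.C z) ∘ fun z : ℂ => z⁻¹) z := rfl
  set S₁ := R₁.map (fun z : ℂ => z⁻¹) with hS1def
  set u : Polynomial ℂ := C (a (n:ℤ)) * (R₂.map fun z => 1 - Polynomial.C z * X).prod *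
    (R₁.map fun z => -Polynomial.C z).prod with hudef
  have hcu : c = (S₁.map fun z => X - Polynomial.C z).prod * u := by
    rw [hcfact, ← hRsplit, Multiset.map_add, Multiset.prod_add, hR1prod, hudef, hS1def]
    ring
  have happ1 : (((S₁.map fun z => X - Polynomial.C z).prod : Polynomial ℂ) : PowerSeries ℂ) *
      ((u : PowerSeries ℂ) * F) = ↑q := by
    rw [← mul_assoc, ← Polynomial.coe_mul, ← hcu]
    exact hq
  have hS1abs : ∀ z ∈ S₁, ‖z‖ ≤ 1 := by
    intro z hz
    rw [hS1def] at hz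
    obtain ⟨y, hy, rfl⟩ := Multiset.mem_map.mp hz
    have hy1 : 1 ≤ ‖y‖ := (Multiset.mem_filter.mp hy).2
    rw [norm_inv]
    exact inv_le_one_of_one_le₀ hy1
  have hqdeg : q.natDegree < n := by
    rw [Polynomial.natDegree_lt_iff_degree_lt hqne]
    exact PowerSeries.degree_trunc_lt _ n
  have hcount1 : Multiset.card R₁ ≤ q.natDegree := by
    have := card_le_natDegree_of_prod_mul S₁ hS1abs ((u : PowerSeries ℂ) * F) q
      (tendsto_coeff_poly_mul u F hFtend) happ1 hqne
    rwa [hS1def, Multiset.card_map] at this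
  -- b-side application
  have hbu : b = (Rle.map fun z => X - Polynomial.C z).prod *
      (C (a (n:ℤ)) * (Rgt.map fun z => X - Polynomial.C z).prod) := by
    rw [← hfact, ← hRsplit', Multiset.map_add, Multiset.prod_add]
    ring
  have happ2 : (((Rle.map fun z => X - Polynomial.C z).prod : Polynomial ℂ) : PowerSeries ℂ) *
      (((C (a (n:ℤ)) * (Rgt.map fun z => X - Polynomial.C z).prod : Polynomial ℂ) :
        PowerSeries ℂ) * G) = ↑p := by
    rw [← mul_assoc, ← Polynomial.coe_mul, ← hbu]
    exact hp
  have hRleabs : ∀ z ∈ Rle, ‖z‖ ≤ 1 := fun z hz => (Multiset.mem_filter.mp hz).2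
  have hpdeg : p.natDegree < m := by
    rw [Polynomial.natDegree_lt_iff_degree_lt hpne]
    exact PowerSeries.degree_trunc_lt _ m
  have hcount2 : Multiset.card Rle ≤ p.natDegree :=
    card_le_natDegree_of_prod_mul Rle hRleabs _ p
      (tendsto_coeff_poly_mul _ G hGtend) happ2 hpne
  -- counting
  have hsub : Rgt ≤ R₁ := by
    rw [hRgtdef, hR1def]
    apply Multiset.monotone_filter_right
    intro z hz
    simp only [not_le] at hz
    exact le_of_lt hz
  have hcards : Multiset.card Rle + Multiset.card Rgt = m + n := by
    rw [← Multiset.card_add, hRsplit', hcard]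
  have hgt : Multiset.card Rgt ≤ Multiset.card R₁ := Multiset.card_le_card hsub
  omega


end

noncomputable section


open scoped ComplexConjugate

/-- coordinates of an `ℓ²` element tend to zero. -/
lemma ell2_tendsto_zero (x : ell2) : Tendsto (fun i => x i) atTop (nhds 0) := by
  have h2 : Summable (fun i => ‖x i‖ ^ (2:ℝ)) := by
    have hsum := (lp.memℓp x).summable (p := 2) (by norm_num)
    simpa using hsum
  have ht : Tendsto (fun i => ‖x i‖ ^ (2:ℝ)) atTop (nhds 0) := h2.tendsto_atTop_zero
  have hnorm : Tendsto (fun i => ‖x i‖) atTop (nhds 0) := by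
    have hcont : Tendsto Real.sqrt (nhds 0) (nhds 0) := by
      simpa [Real.sqrt_zero] using Real.continuous_sqrt.tendsto 0
    have := hcont.comp ht
    apply this.congr
    intro i
    simp only [Function.comp_apply]
    rw [show ((2:ℝ)) = ((2:ℕ):ℝ) by norm_num, Real.rpow_natCast,
      Real.sqrt_sq_eq_abs, abs_of_nonneg (norm_nonneg _)]
  exact tendsto_zero_iff_norm_tendsto_zero.mpr hnorm

lemma ell2_apply_eq_inner (i : ℕ) (x : ell2) :
    innerSL ℂ (E := ell2) (lp.single 2 i (1:ℂ)) x = x i := by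
  show (inner ℂ (lp.single 2 i (1:ℂ)) x : ℂ) = x i
  rw [lp.inner_single_left]
  simp [RCLike.inner_apply]

/-- if a bounded operator kills coordinate `i` of every basis vector, it kills
coordinate `i` of everything. -/
lemma coord_zero_of_single (Eop : ell2 →L[ℂ] ell2) (i : ℕ)
    (h : ∀ j : ℕ, (Eop (lp.single 2 j 1)) i = 0) (x : ell2) : (Eop x) i = 0 := by
  have hx : HasSum (fun j : ℕ => lp.single 2 j (x j)) x :=
    lp.hasSum_single (by norm_num) x
  have hEx : HasSum (fun j : ℕ => Eop (lp.single 2 j (x j))) (Eop x) := Eop.hasSum hx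
  have hinner := (innerSL ℂ (E := ell2) (lp.single 2 i (1:ℂ))).hasSum hEx
  have hzero : ∀ j : ℕ, innerSL ℂ (E := ell2) (lp.single 2 i (1:ℂ))
      (Eop (lp.single 2 j (x j))) = 0 := by
    intro j
    have hsm : lp.single 2 j (x j) = (x j) • lp.single (E := fun _ : ℕ => ℂ) 2 j (1:ℂ) := by
      rw [← lp.single_smul]
      congr 1
      simp
    rw [hsm, map_smul, map_smul, ell2_apply_eq_inner]
    rw [h j]
    simp
  rw [ell2_apply_eq_inner] at hinner
  exact hinner.unique (by simpa [hzero] using (hasSum_zero (α := ℂ) (β := ℕ)))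

/-- Fredholm alternative for finite-rank perturbations of the identity. -/
lemma fredholm_alt (Fo : ell2 →L[ℂ] ell2) (M : Submodule ℂ ell2)
    (hfin : FiniteDimensional ℂ M) (hr : ∀ x, Fo x ∈ M)
    (hinj : Function.Injective fun x => x - Fo x) :
    Function.Surjective fun x => x - Fo x := by
  classical
  let g : M →ₗ[ℂ] M :=
    { toFun := fun x => ⟨x.1 - Fo x.1, M.sub_mem x.2 (hr x.1)⟩
      map_add' := by
        intro x y
        apply Subtype.ext
        show ((x + y : M) : ell2) - Fo ↑(x + y) = (↑x - Fo ↑x) + (↑y - Fo ↑y)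
        rw [Submodule.coe_add, map_add]
        exact add_sub_add_comm _ _ _ _
      map_smul' := by
        intro cx y
        apply Subtype.ext
        show ((cx • y : M) : ell2) - Fo ↑(cx • y) = cx • (↑y - Fo ↑y)
        rw [Submodule.coe_smul, map_smul, smul_sub] }
  have hginj : Function.Injective g := by
    intro x y hxy
    have : x.1 - Fo x.1 = y.1 - Fo y.1 := congrArg Subtype.val hxy
    exact Subtype.ext (hinj this)
  haveI := hfin
  have hgsurj : Function.Surjective g := LinearMap.injective_iff_surjective.mp hginj
  intro y
  obtain ⟨mm, hm⟩ := hgsurj ⟨Fo y, hr y⟩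
  have hm' : mm.1 - Fo mm.1 = Fo y := congrArg Subtype.val hm
  refine ⟨y + mm.1, ?_⟩
  simp only [map_add]
  rw [add_sub_add_comm, hm']
  simp

/-- the subspace of sequences supported on coordinates `< k`. -/
def finSupp (k : ℕ) : Submodule ℂ ell2 where
  carrier := {x : ell2 | ∀ i : ℕ, k ≤ i → x i = 0}
  zero_mem' := by intro i _; simp
  add_mem' := by
    intro x y hx hy i hi
    have : (x + y) i = x i + y i := by rw [lp.coeFn_add]; rfl
    rw [this, hx i hi, hy i hi, add_zero]
  smul_mem' := by
    intro c x hx i hi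
    have : (c • x) i = c * x i := by rw [lp.coeFn_smul]; rfl
    rw [this, hx i hi, mul_zero]

instance finSupp_findim (k : ℕ) : FiniteDimensional ℂ (finSupp k) := by
  classical
  let φ : finSupp k →ₗ[ℂ] (Fin k → ℂ) :=
    { toFun := fun x => fun i => x.1 i
      map_add' := by
        intro x y
        funext i
        show (((x:ell2) + (y:ell2)) : ∀ _, ℂ) i = _
        rw [lp.coeFn_add]
        rfl
      map_smul' := by
        intro c x
        funext i
        show ((c • (x:ell2)) : ∀ _, ℂ) i = _
        rw [lp.coeFn_smul]
        rfl }
  apply FiniteDimensional.of_injective φ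
  intro x y hxy
  apply Subtype.ext
  apply lp.ext
  funext i
  by_cases hi : i < k
  · exact congrFun hxy ⟨i, hi⟩
  · rw [x.2 i (by omega), y.2 i (by omega)]

end

noncomputable section

open ContinuousLinearMap

theorem stmt_aux (m n : ℕ) (hm : 1 ≤ m) (hn : 1 ≤ n) (a : ℤ → ℂ)
    (ham : a (-(m : ℤ)) ≠ 0) (han : a (n : ℤ) ≠ 0)
    (hsupp : ∀ k : ℤ, (k < -(m : ℤ) ∨ (n : ℤ) < k) → a k = 0)
    (k₁ k₂ : ℕ) (hk₁ : 1 ≤ k₁) (hk₂ : 1 ≤ k₂)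
    (T E A : ell2 →L[ℂ] ell2)
    (hT : ∀ (v : ell2) (i : ℕ),
      (T v) i = ∑ j ∈ Finset.range (i + n + 1), a ((j : ℤ) - (i : ℤ)) * v j)
    (hE : ∀ i j : ℕ, (k₁ ≤ i ∨ k₂ ≤ j) → (E (lp.single 2 j 1)) i = 0)
    (hA : A = T + E)
    (hinv : IsUnit A) : IsUnit T := by
  classical
  -- T on basis vectors
  have hTs : ∀ i k : ℕ, (T (lp.single 2 i 1)) k = a ((i:ℤ) - (k:ℤ)) := by
    intro i k
    rw [hT]
    by_cases hik : i < k + n + 1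
    · rw [Finset.sum_eq_single i]
      · rw [lp.single_apply_self, mul_one]
      · intro j _ hji
        rw [lp.single_apply_ne 2 i 1 hji, mul_zero]
      · intro hni
        exact absurd (Finset.mem_range.mpr hik) hni
    · rw [Finset.sum_eq_zero, hsupp _ (Or.inr (by push_cast; omega))]
      intro j hj
      simp only [Finset.mem_range] at hj
      rw [lp.single_apply_ne 2 i 1 (by omega), mul_zero]
  -- inverse of A
  obtain ⟨u, hu⟩ := hinv
  set B : ell2 →L[ℂ] ell2 := ↑u⁻¹ with hBdef
  have hBA : ∀ x, B (A x) = x := by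
    intro x
    have h1 : ((↑u⁻¹ * ↑u : ell2 →L[ℂ] ell2)) x = (1 : ell2 →L[ℂ] ell2) x := by
      rw [u.inv_mul]
    simpa [hu, ContinuousLinearMap.mul_apply] using h1
  have hAB : ∀ x, A (B x) = x := by
    intro x
    have h1 : ((↑u * ↑u⁻¹ : ell2 →L[ℂ] ell2)) x = (1 : ell2 →L[ℂ] ell2) x := by
      rw [u.mul_inv]
    simpa [hu, ContinuousLinearMap.mul_apply] using h1
  set Fo : ell2 →L[ℂ] ell2 := B.comp E with hFodef
  have hTx : ∀ x, T x = A (x - Fo x) := by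
    intro x
    have hAx : A x = T x + E x := by rw [hA]; rfl
    rw [map_sub, hAx, hFodef, ContinuousLinearMap.comp_apply, hAB]
    abel
  -- membership of E x in finSupp k₁
  have hEmem : ∀ x, E x ∈ finSupp k₁ := by
    intro x i hi
    exact coord_zero_of_single E i (fun j => hE i j (Or.inl hi)) x
  -- E kills late basis vectors
  have hEsingle : ∀ j, k₂ ≤ j → E (lp.single 2 j 1) = 0 := by
    intro j hj
    apply lp.ext
    funext i
    rw [hE i j (Or.inr hj)]
    rfl
  by_cases hTinj : Function.Injective T
  · -- T injective : use Fredholm alternative on Fo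
    have hIinj : Function.Injective fun x => x - Fo x := by
      intro x y hxy
      simp only at hxy
      apply hTinj
      rw [hTx, hTx, hxy]
    set M' : Submodule ℂ ell2 := (finSupp k₁).map (B : ell2 →ₗ[ℂ] ell2) with hM'def
    have hr : ∀ x, Fo x ∈ M' := by
      intro x
      exact ⟨E x, hEmem x, rfl⟩
    have hsurj := fredholm_alt Fo M' inferInstance hr hIinj
    have hTsurj : Function.Surjective T := by
      intro y
      obtain ⟨x, hx⟩ := hsurj (B y)
      simp only at hx
      exact ⟨x, by rw [hTx, hx, hAB]⟩
    exact ContinuousLinearMap.isUnit_iff_bijective.mpr ⟨hTinj, hTsurj⟩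
  · -- T not injective: get kernel vector, show adjoint injective by Coburn, conclude
    -- kernel vector of T
    have hker : ∃ v : ell2, T v = 0 ∧ v ≠ 0 := by
      rw [Function.not_injective_iff] at hTinj
      obtain ⟨x, y, hxy, hne⟩ := hTinj
      exact ⟨x - y, by rw [map_sub, hxy, sub_self], sub_ne_zero.mpr hne⟩
    obtain ⟨v, hv, hvne⟩ := hker
    set Td := ContinuousLinearMap.adjoint T with hTddef
    -- coordinates of the adjoint
    have hcoord : ∀ (w : ell2) (i : ℕ), (Td w) i
        = ∑ j ∈ Finset.range (i + m + 1), (starRingEnd ℂ) (a ((i:ℤ) - (j:ℤ))) * w j := by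
      intro w i
      have h2 := ell2_apply_eq_inner i (Td w)
      rw [← h2]
      show (inner ℂ (lp.single 2 i (1:ℂ)) (Td w) : ℂ) = _
      rw [hTddef, ContinuousLinearMap.adjoint_inner_right]
      rw [lp.inner_eq_tsum]
      have hts : ∀ k : ℕ, k ∉ Finset.range (i + m + 1) →
          (inner ℂ ((T (lp.single 2 i (1:ℂ))) k) (w k) : ℂ) = 0 := by
        intro k hk
        simp only [Finset.mem_range] at hk
        rw [RCLike.inner_apply, hTs, hsupp _ (Or.inl (by push_cast; omega))]
        simp
      rw [tsum_eq_sum hts]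
      apply Finset.sum_congr rfl
      intro k _
      rw [RCLike.inner_apply, hTs, mul_comm]
  -- adjoint kernel is trivial via Coburn
    have hTdker : ∀ w : ell2, Td w = 0 → w = 0 := by
      intro w hw
      by_contra hwne
      apply coburn_core m n hm hn a ham han hsupp (fun i => v i)
        (fun j => (starRingEnd ℂ) (w j)) (ell2_tendsto_zero v)
        (by simpa [Function.comp_def] using ((continuous_star.tendsto (0:ℂ)).comp (ell2_tendsto_zero w)))
      · intro i
        rw [← hT v i, hv]
        rfl
      · intro i
        have h0 : (Td w) i = 0 := by rw [hw]; rfl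
        rw [hcoord] at h0
        have := congrArg (starRingEnd ℂ) h0
        rw [map_sum, map_zero] at this
        rw [← this]
        apply Finset.sum_congr rfl
        intro j _
        rw [map_mul, Complex.conj_conj]
      · intro h
        exact hvne (lp.ext (funext fun i => congrFun h i))
      · intro h
        apply hwne
        apply lp.ext
        funext j
        have := congrFun h j
        simpa using congrArg (starRingEnd ℂ) this
    have hTdinj : Function.Injective Td := by
      intro x y hxy
      have : Td (x - y) = 0 := by rw [map_sub, hxy, sub_self]
      have := hTdker _ this
      rwa [sub_eq_zero] at this
    -- operator factorization and adjoint
    have hTop : T = A.comp (ContinuousLinearMap.id ℂ ell2 - Fo) := by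
      ext x
      rw [hTx]
      rfl
    set Ad := ContinuousLinearMap.adjoint A with hAddef
    set Fd := ContinuousLinearMap.adjoint Fo with hFddef
    have hTdfac : ∀ x, Td x = Ad x - Fd (Ad x) := by
      intro x
      rw [hTddef, hTop, ContinuousLinearMap.adjoint_comp]
      rw [map_sub, ContinuousLinearMap.adjoint_id]
      rfl
    have hAdunit : IsUnit Ad := by
      rw [hAddef, ← ContinuousLinearMap.star_eq_adjoint]
      exact isUnit_star.mpr ⟨u, hu⟩
    have hAdbij : Function.Bijective Ad := ContinuousLinearMap.isUnit_iff_bijective.mp hAdunit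
    have hFdmem : ∀ x, Fd x ∈ finSupp k₂ := by
      intro x j hj
      have hFd' : Fd = (ContinuousLinearMap.adjoint E).comp (ContinuousLinearMap.adjoint B) := by
        rw [hFddef, hFodef, ContinuousLinearMap.adjoint_comp]
      rw [hFd', ContinuousLinearMap.comp_apply]
      set y := ContinuousLinearMap.adjoint B x
      have h2 := ell2_apply_eq_inner j (ContinuousLinearMap.adjoint E y)
      rw [← h2]
      show (inner ℂ (lp.single 2 j (1:ℂ)) (ContinuousLinearMap.adjoint E y) : ℂ) = 0
      rw [ContinuousLinearMap.adjoint_inner_right, hEsingle j hj]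
      simp
    have hIdinj : Function.Injective fun x => x - Fd x := by
      intro x y hxy
      obtain ⟨x', hx'⟩ := hAdbij.2 x
      obtain ⟨y', hy'⟩ := hAdbij.2 y
      have : Td x' = Td y' := by
        rw [hTdfac, hTdfac, hx', hy']
        exact hxy
      rw [← hx', ← hy', hTdinj this]
    have hsurj := fredholm_alt Fd (finSupp k₂) inferInstance hFdmem hIdinj
    have hTdsurj : Function.Surjective Td := by
      intro y
      obtain ⟨z, hz⟩ := hsurj y
      obtain ⟨x, hx⟩ := hAdbij.2 z
      exact ⟨x, by rw [hTdfac, hx]; exact hz⟩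
    have hTdunit : IsUnit Td := ContinuousLinearMap.isUnit_iff_bijective.mpr ⟨hTdinj, hTdsurj⟩
    rw [hTddef, ← ContinuousLinearMap.star_eq_adjoint] at hTdunit
    exact isUnit_star.mp hTdunit

end


end AuxiliaryLemmas

/-- if the quasi-Toeplitz operator `A = T(a) + E` is invertible on `ℓ²`,
then the Toeplitz operator `T(a)` is invertible on `ℓ²`. -/
theorem stmt_1 (m n : ℕ) (hm : 1 ≤ m) (hn : 1 ≤ n) (a : ℤ → ℂ)
    (ham : a (-(m : ℤ)) ≠ 0) (han : a (n : ℤ) ≠ 0)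
    (hsupp : ∀ k : ℤ, (k < -(m : ℤ) ∨ (n : ℤ) < k) → a k = 0)
    (k₁ k₂ : ℕ) (hk₁ : 1 ≤ k₁) (hk₂ : 1 ≤ k₂)
    (T E A : ell2 →L[ℂ] ell2)
    (hT : ∀ (v : ell2) (i : ℕ),
      (T v) i = ∑ j ∈ Finset.range (i + n + 1), a ((j : ℤ) - (i : ℤ)) * v j)
    (hE : ∀ i j : ℕ, (k₁ ≤ i ∨ k₂ ≤ j) → (E (lp.single 2 j 1)) i = 0)
    (hA : A = T + E)
    (hinv : IsUnit A) : IsUnit T := by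
  exact stmt_aux m n hm hn a ham han hsupp k₁ k₂ hk₁ hk₂ T E A hT hE hA hinv
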